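/- Let f : ℝ³ × ℝ² → ℝ³ be the unicycle dynamics f((x₁,x₂,x₃),(u₁,u₂)) = (u₁ cos(x₃), u₁ sin(x₃), u₂). Let ε ≠ 0 and let B ⊂ ℝ³ be a ball centered at 0 ∈ ℝ³ of radius strictly less than π/2. Then the point (0, ε, 0) ∈ ℝ³ does not belong to the image f(B × ℝ²). In particular, f(𝒩) is not a neighborhood of 0 ∈ ℝ³ for 𝒩 = B × ℝ², so the unicycle does not satisfy the Brockett necessary condition for stabilizability by continuous state feedback. -/

import Mathlib

open Set Filter

/-- The unicycle dynamics `f((x₁,x₂,x₃),(u₁,u₂)) = (u₁cos x₃, u₁sin x₃, u₂)`. -/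
noncomputable def fUni (p : EuclideanSpace ℝ (Fin 3) × (ℝ × ℝ)) :
    EuclideanSpace ℝ (Fin 3) :=
  WithLp.toLp 2 ![p.2.1 * Real.cos (p.1 2), p.2.1 * Real.sin (p.1 2), p.2.2]

noncomputable def vTriple (t : ℝ) : EuclideanSpace ℝ (Fin 3) := WithLp.toLp 2 ![0, t, 0]

lemma norm_vTriple (t : ℝ) : ‖vTriple t‖ = |t| := by
  rw [EuclideanSpace.norm_eq]
  simp [vTriple, Fin.sum_univ_three, Real.sqrt_sq_eq_abs]

lemma abs_third_le (x : EuclideanSpace ℝ (Fin 3)) : |x 2| ≤ ‖x‖ := by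
  rw [EuclideanSpace.norm_eq]
  have h : |x 2| = Real.sqrt (|x 2| ^ 2) := (Real.sqrt_sq (abs_nonneg _)).symm
  rw [h]
  apply Real.sqrt_le_sqrt
  rw [Fin.sum_univ_three]
  have e0 : ‖x 0‖ ^ 2 = (x 0) ^ 2 := by rw [Real.norm_eq_abs, sq_abs]
  have e1 : ‖x 1‖ ^ 2 = (x 1) ^ 2 := by rw [Real.norm_eq_abs, sq_abs]
  have e2 : ‖x 2‖ ^ 2 = |x 2| ^ 2 := by rw [Real.norm_eq_abs]
  nlinarith [sq_nonneg (x 0), sq_nonneg (x 1)]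

lemma key (ε ρ : ℝ) (hε : ε ≠ 0) (hρ : ρ < Real.pi / 2) :
    (WithLp.toLp 2 ![0, ε, 0] : EuclideanSpace ℝ (Fin 3)) ∉
      fUni '' (Metric.ball (0 : EuclideanSpace ℝ (Fin 3)) ρ ×ˢ (Set.univ : Set (ℝ × ℝ))) := by
  rintro ⟨⟨x, u⟩, ⟨hx, -⟩, heq⟩
  rw [Metric.mem_ball, dist_zero_right] at hx
  have h2 : |x 2| < Real.pi / 2 := lt_of_le_of_lt (abs_third_le x) (lt_trans hx hρ)
  have hcos : Real.cos (x 2) > 0 := by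
    apply Real.cos_pos_of_mem_Ioo
    constructor <;> [linarith [(abs_lt.mp h2).1]; linarith [(abs_lt.mp h2).2]]
  have h0 : u.1 * Real.cos (x 2) = 0 := by
    have := congrArg (fun v : EuclideanSpace ℝ (Fin 3) => v 0) heq
    simpa [fUni] using this
  have h1 : u.1 * Real.sin (x 2) = ε := by
    have := congrArg (fun v : EuclideanSpace ℝ (Fin 3) => v 1) heq
    simpa [fUni] using this
  have hu : u.1 = 0 := by
    rcases mul_eq_zero.mp h0 with h | h
    · exact h
    · linarith
  rw [hu, zero_mul] at h1
  exact hε h1.symm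

/-- The unicycle does not satisfy the Brockett condition: for any ball `B` of
radius `< π/2` around the origin, `(0,ε,0) ∉ f(B × ℝ²)` for every `ε ≠ 0`, hence
`f(B × ℝ²)` is not a neighborhood of `0`. -/
theorem stmt16 (ε ρ : ℝ) (hε : ε ≠ 0) (hρ : ρ < Real.pi / 2) :
    (WithLp.toLp 2 ![0, ε, 0] : EuclideanSpace ℝ (Fin 3)) ∉
      fUni '' (Metric.ball (0 : EuclideanSpace ℝ (Fin 3)) ρ ×ˢ (Set.univ : Set (ℝ × ℝ))) ∧
    fUni '' (Metric.ball (0 : EuclideanSpace ℝ (Fin 3)) ρ ×ˢ (Set.univ : Set (ℝ × ℝ))) ∉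
      nhds (0 : EuclideanSpace ℝ (Fin 3)) := by
  refine ⟨key ε ρ hε hρ, fun hnhds => ?_⟩
  obtain ⟨r, hr, hball⟩ := Metric.mem_nhds_iff.mp hnhds
  have hmem : vTriple (r/2) ∈ Metric.ball (0 : EuclideanSpace ℝ (Fin 3)) r := by
    rw [Metric.mem_ball, dist_zero_right, norm_vTriple, abs_of_pos (by linarith)]
    linarith
  exact key (r/2) ρ (by positivity) hρ (hball hmem)
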